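/- Let G be a countable abelian group. If T ⊆ G is thick and φ : T → C is a coloring with C finite, then some color class φ⁻¹(c) is piecewise syndetic in G. -/

import Mathlib

open Pointwise


/-- A subset of an abelian group is thick if it contains a translate of every finite set. -/
def Thick {G : Type*} [AddCommGroup G] (T : Set G) : Prop :=
  ∀ F : Finset G, ∃ g : G, ∀ f ∈ F, g + f ∈ T

/-- A subset is piecewise syndetic if a finite union of its translates is thick. -/
def PWSyn {G : Type*} [AddCommGroup G] (S : Set G) : Prop :=
  ∃ F : Finset G, Thick {x : G | ∃ t ∈ F, x + t ∈ S}

/-- In a countable abelian group, any finite coloring of a thick set has a piecewise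
syndetic color class. -/
theorem thick_coloring_pwSyn {G : Type*} [AddCommGroup G] [Countable G]
    (T : Set G) (hT : Thick T) {C : Type*} [Finite C] (φ : T → C) :
    ∃ c : C, PWSyn {x : G | ∃ h : x ∈ T, φ ⟨x, h⟩ = c} := by
  classical
  haveI := Classical.decEq G
  have := Fintype.ofFinite C
  by_contra hcon
  push_neg at hcon
  set A : C → Set G := fun c => {x : G | ∃ h : x ∈ T, φ ⟨x, h⟩ = c} with hA
  have key : ∀ l : List C, ∀ F : Finset G, ∃ F' : Finset G,
      ∀ g : G, ∃ g' : G, (∀ f ∈ F, ∃ f' ∈ F', g' + f = g + f') ∧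
        (∀ f ∈ F, ∀ c ∈ l, g' + f ∉ A c) := by
    intro l
    induction l with
    | nil =>
      intro F
      exact ⟨F, fun g => ⟨g, fun f hf => ⟨f, hf, rfl⟩, fun _ _ c hc => (List.not_mem_nil hc).elim⟩⟩
    | cons c l ih =>
      intro F
      obtain ⟨F₁, hF₁⟩ := ih F
      have hc := hcon c
      rw [PWSyn] at hc
      push_neg at hc
      have hthick := hc F₁
      rw [Thick] at hthick
      push_neg at hthick
      obtain ⟨E, hE⟩ := hthick
      refine ⟨(E + F₁ : Finset G), fun g => ?_⟩
      obtain ⟨e, he, hne⟩ := hE g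
      obtain ⟨g', hg1, hg2⟩ := hF₁ (g + e)
      refine ⟨g', fun f hf => ?_, fun f hf c' hc' => ?_⟩
      · obtain ⟨f₁, hf₁, heq⟩ := hg1 f hf
        exact ⟨e + f₁, Finset.add_mem_add he hf₁, by rw [heq, add_assoc]⟩
      · rcases List.mem_cons.mp hc' with rfl | hc''
        · obtain ⟨f₁, hf₁, heq⟩ := hg1 f hf
          intro hmem
          exact hne ⟨f₁, hf₁, heq ▸ hmem⟩
        · exact hg2 f hf c' hc''
  obtain ⟨F', hF'⟩ := key Finset.univ.toList {0}
  obtain ⟨g, hg⟩ := hT F'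
  obtain ⟨g', hg1, hg2⟩ := hF' g
  obtain ⟨f', hf', heq⟩ := hg1 0 (Finset.mem_singleton_self 0)
  have hT' : g' + 0 ∈ T := heq ▸ hg f' hf'
  exact hg2 0 (Finset.mem_singleton_self 0) _
    (Finset.mem_toList.mpr (Finset.mem_univ _)) ⟨hT', rfl⟩
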